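/- For α, β real with α not a nonpositive integer and λ ∈ ℂ, the Jacobi function φ^{(α,β)}_{iλ}(t) = ₂F₁((ρ-λ)/2, (ρ+λ)/2; α+1; -sinh²t) with ρ = α+β+1 satisfies the Jacobi differential equation u'' + ((2α+1) coth t + (2β+1) tanh t) u' = (λ² - ρ²) u on (0,∞). -/

import Mathlib

open Real Complex

/-- The Gauss hypergeometric series `₂F₁(a,b;c;z)`. -/
noncomputable def hyp2F1 (a b c z : ℂ) : ℂ :=
  ∑' k : ℕ, ((ascPochhammer ℂ k).eval a * (ascPochhammer ℂ k).eval b /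
    ((ascPochhammer ℂ k).eval c * (Nat.factorial k : ℂ))) * z ^ k

/-- The Jacobi function `φ^{(α,β)}_{iλ}(t)`. -/
noncomputable def jacobiPhi (α β : ℝ) (lam : ℂ) (t : ℝ) : ℂ :=
  hyp2F1 ((((α : ℂ) + β + 1) - lam) / 2) ((((α : ℂ) + β + 1) + lam) / 2)
    ((α : ℂ) + 1) (-(Real.sinh t ^ 2 : ℝ))

namespace JacobiODE

open Filter Topology


/-- Growth condition: coefficients grow slower than any geometric `r^k`, `r>1`. -/
def Grows (c : ℕ → ℂ) : Prop := ∀ r : ℝ, 1 < r → ∃ C : ℝ, 0 ≤ C ∧ ∀ k, ‖c k‖ ≤ C * r ^ k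

lemma Grows.congr {c d : ℕ → ℂ} (h : Grows c) (e : ∀ n, d n = c n) : Grows d := by
  have : d = c := funext e
  rwa [this]

lemma Grows.shift {c : ℕ → ℂ} (h : Grows c) : Grows fun n => c (n + 1) := by
  intro r hr
  obtain ⟨C, hC0, hC⟩ := h r hr
  refine ⟨C * r, by positivity, fun k => ?_⟩
  calc ‖c (k + 1)‖ ≤ C * r ^ (k + 1) := hC _
    _ = C * r * r ^ k := by ring

lemma bdd_aux {q : ℝ} (m : ℝ) (hq0 : 0 ≤ q) (hq : q < 1) :
    ∃ B : ℝ, 0 ≤ B ∧ ∀ n : ℕ, ((n : ℝ) + m) * q ^ n ≤ B := by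
  have hsum : Summable (fun n : ℕ => (n : ℝ) ^ 1 * q ^ n) :=
    summable_pow_mul_geometric_of_norm_lt_one 1
      (by rwa [Real.norm_eq_abs, _root_.abs_of_nonneg hq0])
  have h1 : Tendsto (fun n : ℕ => (n : ℝ) ^ 1 * q ^ n) atTop (𝓝 0) := hsum.tendsto_atTop_zero
  have h2 : Tendsto (fun n : ℕ => m * q ^ n) atTop (𝓝 0) := by
    simpa using (tendsto_pow_atTop_nhds_zero_of_lt_one hq0 hq).const_mul m
  have h3 : Tendsto (fun n : ℕ => ((n : ℝ) + m) * q ^ n) atTop (𝓝 0) := by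
    have := h1.add h2
    simp only [add_zero] at this
    refine this.congr fun n => by ring
  obtain ⟨B, hB⟩ := h3.bddAbove_range
  refine ⟨max B 0, le_max_right _ _, fun n => ?_⟩
  exact le_trans (hB (Set.mem_range_self n)) (le_max_left _ _)

lemma Grows.mul_coeff {c : ℕ → ℂ} (h : Grows c) (x : ℂ) :
    Grows fun n => ((n : ℂ) + x) * c n := by
  intro r hr
  have hr0 : (0 : ℝ) < r := lt_trans one_pos hr
  set s := Real.sqrt r with hsdef
  have hs0 : 0 < s := Real.sqrt_pos.2 hr0
  have hs1 : 1 < s := by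
    rw [hsdef, show (1:ℝ) = Real.sqrt 1 by simp]
    exact Real.sqrt_lt_sqrt (by norm_num) hr
  have hss : s * s = r := Real.mul_self_sqrt hr0.le
  obtain ⟨C, hC0, hC⟩ := h s hs1
  obtain ⟨B, hB0, hB⟩ := bdd_aux (q := 1/s) ‖x‖ (by positivity) (by rw [div_lt_one hs0]; exact hs1)
  refine ⟨C * B, by positivity, fun k => ?_⟩
  have h1 : ‖((k : ℂ) + x) * c k‖ ≤ ((k : ℝ) + ‖x‖) * (C * s ^ k) := by
    rw [norm_mul]
    have hk : ‖(k : ℂ) + x‖ ≤ (k : ℝ) + ‖x‖ := by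
      refine le_trans (norm_add_le _ _) ?_
      simp
    exact mul_le_mul hk (hC k) (norm_nonneg _) (by positivity)
  refine h1.trans ?_
  have key : ((k : ℝ) + ‖x‖) * (C * s ^ k) = C * (((k : ℝ) + ‖x‖) * (1/s) ^ k) * r ^ k := by
    rw [← hss]
    have hsk : (s : ℝ) ^ k ≠ 0 := by positivity
    rw [one_div, inv_pow, mul_pow]
    field_simp
  rw [key]
  have := hB k
  calc C * (((k : ℝ) + ‖x‖) * (1/s) ^ k) * r ^ k ≤ C * B * r ^ k := by
        have hrk : (0:ℝ) ≤ r ^ k := by positivity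
        have : C * (((k : ℝ) + ‖x‖) * (1/s) ^ k) ≤ C * B :=
          mul_le_mul_of_nonneg_left (hB k) hC0
        exact mul_le_mul_of_nonneg_right this hrk

lemma Grows.summable {c : ℕ → ℂ} (h : Grows c) {z : ℂ} (hz : ‖z‖ < 1) :
    Summable fun n => c n * z ^ n := by
  set w := max ‖z‖ (1/2) with hw
  have hw0 : 0 < w := lt_of_lt_of_le (by norm_num) (le_max_right _ _)
  have hw1 : w < 1 := max_lt hz (by norm_num)
  set s := Real.sqrt w with hs
  have hs0 : 0 < s := Real.sqrt_pos.2 hw0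
  have hs1 : s < 1 := by
    rw [hs, show (1:ℝ) = Real.sqrt 1 by simp]
    exact Real.sqrt_lt_sqrt hw0.le hw1
  have hss : s * s = w := Real.mul_self_sqrt hw0.le
  obtain ⟨C, hC0, hC⟩ := h (1/s) (by rw [lt_div_iff₀ hs0]; simpa using hs1)
  refine Summable.of_norm_bounded
    (((summable_geometric_of_lt_one hs0.le hs1)).mul_left C) (fun n => ?_)
  rw [norm_mul, norm_pow]
  have h1 : ‖c n‖ * ‖z‖ ^ n ≤ (C * (1/s) ^ n) * w ^ n := by
    refine mul_le_mul (hC n) ?_ (by positivity) (by positivity)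
    exact pow_le_pow_left₀ (norm_nonneg z) (le_max_left _ _) n
  refine h1.trans (le_of_eq ?_)
  rw [← hss]
  have hsn : s ^ n ≠ 0 := by positivity
  rw [one_div, inv_pow, mul_pow]
  field_simp


noncomputable def hcoef (a b c : ℂ) (n : ℕ) : ℂ :=
  (ascPochhammer ℂ n).eval a * (ascPochhammer ℂ n).eval b /
    ((ascPochhammer ℂ n).eval c * (Nat.factorial n : ℂ))

lemma poch_ne_zero {c : ℂ} (hc : ∀ n : ℕ, c + (n : ℂ) ≠ 0) (n : ℕ) :
    (ascPochhammer ℂ n).eval c ≠ 0 := by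
  induction n with
  | zero => simp
  | succ m ih =>
    rw [ascPochhammer_succ_eval]
    exact mul_ne_zero ih (hc m)

lemma hcoef_rec (a b : ℂ) {c : ℂ} (hc : ∀ n : ℕ, c + (n : ℂ) ≠ 0) (n : ℕ) :
    ((n : ℂ) + 1) * (c + n) * hcoef a b c (n + 1) = (a + n) * (b + n) * hcoef a b c n := by
  unfold hcoef
  rw [ascPochhammer_succ_eval, ascPochhammer_succ_eval, ascPochhammer_succ_eval,
    Nat.factorial_succ]
  have h1 := poch_ne_zero hc n
  have h2 : ((Nat.factorial n : ℕ) : ℂ) ≠ 0 := Nat.cast_ne_zero.2 n.factorial_ne_zero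
  have h3 := hc n
  have h4 : ((n : ℂ) + 1) ≠ 0 := by
    have := Nat.cast_add_one_ne_zero (R := ℂ) n
    exact_mod_cast this
  push_cast
  field_simp

lemma tendsto_div_add (w v : ℂ) :
    Tendsto (fun n : ℕ => w / (v + (n : ℂ))) atTop (𝓝 0) := by
  have hcob : Tendsto (fun n : ℕ => v + (n : ℂ)) atTop (Bornology.cobounded ℂ) := by
    rw [← tendsto_norm_atTop_iff_cobounded]
    have hlow : ∀ n : ℕ, (n : ℝ) - ‖v‖ ≤ ‖v + (n : ℂ)‖ := by
      intro n
      have h : ‖((n:ℂ))‖ ≤ ‖v + (n:ℂ)‖ + ‖v‖ := by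
        calc ‖((n:ℂ))‖ = ‖(v + (n:ℂ)) - v‖ := by congr 1; ring
          _ ≤ ‖v + (n:ℂ)‖ + ‖v‖ := norm_sub_le _ _
      have hn : ‖((n:ℂ))‖ = (n:ℝ) := by simp
      linarith
    refine tendsto_atTop_mono hlow ?_
    exact tendsto_atTop_add_const_right atTop (-‖v‖) tendsto_natCast_atTop_atTop
  have := (tendsto_inv₀_cobounded.comp hcob).const_mul w
  simpa [div_eq_mul_inv, Function.comp] using this

lemma grows_hcoef (a b : ℂ) {c : ℂ} (hc : ∀ n : ℕ, c + (n : ℂ) ≠ 0) :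
    Grows (hcoef a b c) := by
  intro r hr
  -- the ratio tends to 1 in norm
  have hR : Tendsto (fun n : ℕ => ‖(a + (n:ℂ)) * (b + n) / ((c + n) * ((n:ℂ) + 1))‖)
      atTop (𝓝 1) := by
    have hf : Tendsto (fun n : ℕ => (a + (n:ℂ)) / ((n:ℂ) + 1)) atTop (𝓝 1) := by
      have h0 := tendsto_div_add (a - 1) 1
      have := (tendsto_const_nhds (x := (1:ℂ)) (f := (atTop : Filter ℕ))).add h0
      rw [add_zero] at this
      refine this.congr fun n => ?_
      have hne : ((n : ℂ) + 1) ≠ 0 := by exact_mod_cast Nat.cast_add_one_ne_zero (R := ℂ) n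
      have hne' : (1 : ℂ) + (n : ℂ) ≠ 0 := by rw [add_comm]; exact hne
      field_simp
      ring
    have hg : Tendsto (fun n : ℕ => (b + (n:ℂ)) / (c + n)) atTop (𝓝 1) := by
      have h0 := tendsto_div_add (b - c) c
      have := (tendsto_const_nhds (x := (1:ℂ)) (f := (atTop : Filter ℕ))).add h0
      rw [add_zero] at this
      refine this.congr fun n => ?_
      have hne := hc n
      field_simp
      ring
    have hmul := hf.mul hg
    rw [mul_one] at hmul
    have heq : Tendsto (fun n : ℕ => (a + (n:ℂ)) * (b + n) / ((c + n) * ((n:ℂ) + 1)))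
        atTop (𝓝 1) := by
      refine hmul.congr fun n => ?_
      rw [div_mul_div_comm]
      ring_nf
    have := heq.norm
    simpa using this
  have hev : ∀ᶠ n : ℕ in atTop,
      ‖(a + (n:ℂ)) * (b + n) / ((c + n) * ((n:ℂ) + 1))‖ ≤ r :=
    hR.eventually_le_const hr
  obtain ⟨N, hN⟩ := eventually_atTop.1 hev
  -- ratio step
  have hstep : ∀ n, N ≤ n → ‖hcoef a b c (n+1)‖ ≤ r * ‖hcoef a b c n‖ := by
    intro n hn
    have hrec := hcoef_rec a b hc n
    have hne1 : ((n : ℂ) + 1) ≠ 0 := by exact_mod_cast Nat.cast_add_one_ne_zero (R := ℂ) n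
    have hne2 := hc n
    have hco : hcoef a b c (n+1)
        = (a + (n:ℂ)) * (b + n) / ((c + n) * ((n:ℂ) + 1)) * hcoef a b c n := by
      field_simp
      linear_combination hrec
    rw [hco, norm_mul]
    exact mul_le_mul_of_nonneg_right (hN n hn) (norm_nonneg _)
  set C : ℝ := ∑ k ∈ Finset.range (N + 1), ‖hcoef a b c k‖ with hC
  have hC0 : 0 ≤ C := Finset.sum_nonneg fun _ _ => norm_nonneg _
  have hle : ∀ k, k ≤ N → ‖hcoef a b c k‖ ≤ C := by
    intro k hk
    exact Finset.single_le_sum (f := fun k => ‖hcoef a b c k‖)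
      (fun _ _ => norm_nonneg _) (Finset.mem_range.2 (Nat.lt_succ_of_le hk))
  have hr0 : (0:ℝ) < r := lt_trans one_pos hr
  refine ⟨C, hC0, fun k => ?_⟩
  induction k with
  | zero =>
    simpa using hle 0 (Nat.zero_le N)
  | succ m ih =>
    by_cases hm : N ≤ m
    · calc ‖hcoef a b c (m+1)‖ ≤ r * ‖hcoef a b c m‖ := hstep m hm
        _ ≤ r * (C * r ^ m) := mul_le_mul_of_nonneg_left ih hr0.le
        _ = C * r ^ (m+1) := by ring
    · have hm1 : m + 1 ≤ N := Nat.succ_le_of_lt (not_le.1 hm)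
      calc ‖hcoef a b c (m+1)‖ ≤ C := hle _ hm1
        _ ≤ C * r ^ (m+1) := le_mul_of_one_le_right hC0 (one_le_pow₀ hr.le)

lemma hasDerivAt_tsum_pow {c : ℕ → ℂ} (h : Grows c) {z : ℂ} (hz : ‖z‖ < 1) :
    HasDerivAt (fun w => ∑' n, c n * w ^ n)
      (∑' (n : ℕ), ((n : ℂ) + 1) * c (n + 1) * z ^ n) z := by
  set r := (1 + ‖z‖) / 2 with hrdef
  have hzr : ‖z‖ < r := by rw [hrdef]; linarith
  have hr0 : 0 < r := lt_of_le_of_lt (norm_nonneg z) hzr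
  have hr1 : r < 1 := by rw [hrdef]; linarith
  set s := Real.sqrt r with hsdef
  have hs0 : 0 < s := Real.sqrt_pos.2 hr0
  have hs1 : s < 1 := by
    rw [hsdef, show (1:ℝ) = Real.sqrt 1 by simp]
    exact Real.sqrt_lt_sqrt hr0.le hr1
  have hss : s * s = r := Real.mul_self_sqrt hr0.le
  obtain ⟨C, hC0, hC⟩ := h (1/s) (by rw [lt_div_iff₀ hs0]; simpa using hs1)
  set u : ℕ → ℝ := fun n => (C / r) * ((n : ℝ) * s ^ n) with hu
  have husum : Summable u := by
    have := (summable_pow_mul_geometric_of_norm_lt_one (R := ℝ) 1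
      (by rw [Real.norm_eq_abs, _root_.abs_of_nonneg hs0.le]; exact hs1)).mul_left (C / r)
    refine this.congr fun n => by simp [hu]
  have hbound : ∀ (n : ℕ) (w : ℂ), w ∈ Metric.ball (0:ℂ) r →
      ‖c n * ((n : ℂ) * w ^ (n - 1))‖ ≤ u n := by
    intro n w hw
    rw [Metric.mem_ball, dist_zero_right] at hw
    match n with
    | 0 => simp [hu]
    | (m + 1) =>
      have h1 : ‖c (m+1) * (((m+1 : ℕ) : ℂ) * w ^ (m + 1 - 1))‖
          = ‖c (m+1)‖ * (((m+1 : ℕ) : ℝ) * ‖w‖ ^ m) := by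
        rw [Nat.add_sub_cancel, norm_mul, norm_mul, norm_pow, Complex.norm_natCast]
      rw [h1]
      have h2 : ‖c (m+1)‖ * (((m+1 : ℕ) : ℝ) * ‖w‖ ^ m)
          ≤ (C * (1/s) ^ (m+1)) * (((m+1 : ℕ) : ℝ) * r ^ m) := by
        refine mul_le_mul (hC (m+1)) ?_ (by positivity) (by positivity)
        refine mul_le_mul_of_nonneg_left ?_ (by positivity)
        exact pow_le_pow_left₀ (norm_nonneg w) hw.le m
      refine h2.trans (le_of_eq ?_)
      rw [hu]
      rw [← hss]
      have hsm : s ^ m ≠ 0 := by positivity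
      have hs' : s ≠ 0 := hs0.ne'
      rw [one_div, inv_pow, mul_pow]
      field_simp
      ring
  have hg : ∀ (n : ℕ) (w : ℂ), w ∈ Metric.ball (0:ℂ) r →
      HasDerivAt (fun w => c n * w ^ n) (c n * ((n : ℂ) * w ^ (n - 1))) w :=
    fun n w _ => (hasDerivAt_pow n w).const_mul (c n)
  have hg0 : Summable (fun n => c n * (0:ℂ) ^ n) := by
    refine summable_of_ne_finset_zero (s := {0}) (fun n hn => ?_)
    simp only [Finset.mem_singleton] at hn
    simp [zero_pow hn]
  have key := hasDerivAt_tsum_of_isPreconnected husum Metric.isOpen_ball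
    ((convex_ball (0:ℂ) r).isPreconnected) hg hbound (Metric.mem_ball_self hr0) hg0
    (by rwa [Metric.mem_ball, dist_zero_right])
  have hs' : Summable fun n => c n * ((n : ℂ) * z ^ (n - 1)) :=
    Summable.of_norm_bounded husum fun n =>
      hbound n z (by rwa [Metric.mem_ball, dist_zero_right])
  have heq : (∑' n, c n * ((n : ℂ) * z ^ (n - 1)))
      = ∑' (n : ℕ), ((n : ℂ) + 1) * c (n + 1) * z ^ n := by
    rw [Summable.tsum_eq_zero_add hs']
    simp only [Nat.cast_zero, zero_mul, mul_zero, zero_add]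
    exact tsum_congr fun n => by rw [Nat.add_sub_cancel]; push_cast; ring
  rw [← heq]
  exact key

noncomputable def hk1 (a b c : ℂ) (n : ℕ) : ℂ := ((n : ℂ) + 1) * hcoef a b c (n + 1)
noncomputable def hk2 (a b c : ℂ) (n : ℕ) : ℂ := ((n : ℂ) + 1) * hk1 a b c (n + 1)

lemma grows_hk1 (a b : ℂ) {c : ℂ} (hc : ∀ n : ℕ, c + (n : ℂ) ≠ 0) : Grows (hk1 a b c) :=
  ((grows_hcoef a b hc).shift.mul_coeff 1).congr fun n => rfl

lemma grows_hk2 (a b : ℂ) {c : ℂ} (hc : ∀ n : ℕ, c + (n : ℂ) ≠ 0) : Grows (hk2 a b c) :=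
  ((grows_hk1 a b hc).shift.mul_coeff 1).congr fun n => rfl

lemma shift_eq {c d : ℕ → ℂ} {z : ℂ} (h0 : d 0 = 0) (hd : ∀ n, d (n + 1) = c n)
    (hS : Summable fun n => d n * z ^ n) :
    z * ∑' n, c n * z ^ n = ∑' n, d n * z ^ n := by
  rw [← tsum_mul_left, Summable.tsum_eq_zero_add hS, h0, zero_mul, zero_add]
  exact tsum_congr fun n => by rw [hd]; ring

lemma hyp_ode (a b : ℂ) {c : ℂ} (hc : ∀ n : ℕ, c + (n : ℂ) ≠ 0) {z : ℂ} (hz : ‖z‖ < 1) :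
    z * (1 - z) * (∑' (n : ℕ), hk2 a b c n * z ^ n)
      + (c - (a + b + 1) * z) * (∑' (n : ℕ), hk1 a b c n * z ^ n)
    = a * b * ∑' (n : ℕ), hcoef a b c n * z ^ n := by
  have g0 := grows_hcoef a b hc
  have g1 := grows_hk1 a b hc
  have g2 := grows_hk2 a b hc
  have gd1 : Grows fun n => (n : ℂ) * hk1 a b c n :=
    (g1.mul_coeff 0).congr fun n => by push_cast; ring
  have gd0 : Grows fun n => (n : ℂ) * hcoef a b c n :=
    (g0.mul_coeff 0).congr fun n => by push_cast; ring
  have gd0' : Grows fun n => ((n : ℂ) - 1) * ((n : ℂ) * hcoef a b c n) :=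
    (gd0.mul_coeff (-1)).congr fun n => by push_cast; ring
  have S0 := g0.summable hz
  have S1 := g1.summable hz
  have T1 : Summable fun n : ℕ => (n : ℂ) * hk1 a b c n * z ^ n := gd1.summable hz
  have T0 : Summable fun n : ℕ => (n : ℂ) * hcoef a b c n * z ^ n := gd0.summable hz
  have T0' : Summable fun n : ℕ => ((n : ℂ) - 1) * ((n : ℂ) * hcoef a b c n) * z ^ n :=
    gd0'.summable hz
  have A1 : z * ∑' (n : ℕ), hk2 a b c n * z ^ n
      = ∑' (n : ℕ), (n : ℂ) * hk1 a b c n * z ^ n :=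
    shift_eq (by simp) (fun n => by simp only [hk2]; push_cast; ring) T1
  have A2 : z * ∑' (n : ℕ), hk1 a b c n * z ^ n
      = ∑' (n : ℕ), (n : ℂ) * hcoef a b c n * z ^ n :=
    shift_eq (by simp) (fun n => by simp only [hk1]; push_cast; ring) T0
  have A3 : z * ∑' (n : ℕ), (n : ℂ) * hk1 a b c n * z ^ n
      = ∑' (n : ℕ), ((n : ℂ) - 1) * ((n : ℂ) * hcoef a b c n) * z ^ n :=
    shift_eq (by simp) (fun n => by simp only [hk1]; push_cast; ring) T0'
  have hc1 : Summable fun n => c * (hk1 a b c n * z ^ n) := S1.mul_left c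
  have hc2 : Summable fun n : ℕ => (a + b + 1) * ((n : ℂ) * hcoef a b c n * z ^ n) :=
    T0.mul_left _
  calc z * (1 - z) * (∑' (n : ℕ), hk2 a b c n * z ^ n)
        + (c - (a + b + 1) * z) * (∑' (n : ℕ), hk1 a b c n * z ^ n)
      = (z * ∑' (n : ℕ), hk2 a b c n * z ^ n
          - z * (z * ∑' (n : ℕ), hk2 a b c n * z ^ n))
        + (c * ∑' (n : ℕ), hk1 a b c n * z ^ n
          - (a + b + 1) * (z * ∑' (n : ℕ), hk1 a b c n * z ^ n)) := by ring
    _ = ((∑' (n : ℕ), (n : ℂ) * hk1 a b c n * z ^ n)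
          - ∑' (n : ℕ), ((n : ℂ) - 1) * ((n : ℂ) * hcoef a b c n) * z ^ n)
        + (c * ∑' (n : ℕ), hk1 a b c n * z ^ n
          - (a + b + 1) * ∑' (n : ℕ), (n : ℂ) * hcoef a b c n * z ^ n) := by
        rw [A1, A3, A2]
    _ = a * b * ∑' (n : ℕ), hcoef a b c n * z ^ n := by
        rw [← tsum_mul_left (a := c), ← tsum_mul_left (a := a + b + 1),
          ← tsum_mul_left (a := a * b), ← Summable.tsum_sub T1 T0', ← Summable.tsum_sub hc1 hc2,
          ← Summable.tsum_add (T1.sub T0') (hc1.sub hc2)]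
        refine tsum_congr fun n => ?_
        have h := hcoef_rec a b hc n
        simp only [hk1]
        linear_combination z ^ n * h

noncomputable def F0h (a b c w : ℂ) : ℂ := ∑' (n : ℕ), hcoef a b c n * w ^ n
noncomputable def F1h (a b c w : ℂ) : ℂ := ∑' (n : ℕ), hk1 a b c n * w ^ n
noncomputable def F2h (a b c w : ℂ) : ℂ := ∑' (n : ℕ), hk2 a b c n * w ^ n
lemma hasDerivAt_F0h (a b : ℂ) {c : ℂ} (hc : ∀ n : ℕ, c + (n : ℂ) ≠ 0) {z : ℂ}
    (hz : ‖z‖ < 1) : HasDerivAt (F0h a b c) (F1h a b c z) z :=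
  hasDerivAt_tsum_pow (grows_hcoef a b hc) hz

lemma hasDerivAt_F1h (a b : ℂ) {c : ℂ} (hc : ∀ n : ℕ, c + (n : ℂ) ≠ 0) {z : ℂ}
    (hz : ‖z‖ < 1) : HasDerivAt (F1h a b c) (F2h a b c z) z :=
  hasDerivAt_tsum_pow (grows_hk1 a b hc) hz

lemma hyp_ode' (a b : ℂ) {c : ℂ} (hc : ∀ n : ℕ, c + (n : ℂ) ≠ 0) {z : ℂ} (hz : ‖z‖ < 1) :
    z * (1 - z) * F2h a b c z + (c - (a + b + 1) * z) * F1h a b c z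
      = a * b * F0h a b c z := hyp_ode a b hc hz


end JacobiODE

open Filter Topology in
open JacobiODE in
theorem jacobiPhi_ode (α β : ℝ) (hα : ∀ m : ℕ, α ≠ -(m : ℝ)) (lam : ℂ)
    (t : ℝ) (ht : 0 < t) (ht1 : Real.sinh t ^ 2 < 1) :
    deriv (deriv (jacobiPhi α β lam)) t +
      (((2*α+1) * (Real.cosh t / Real.sinh t) + (2*β+1) * Real.tanh t : ℝ) : ℂ) *
        deriv (jacobiPhi α β lam) t
    = (lam ^ 2 - ((α : ℂ) + β + 1) ^ 2) * jacobiPhi α β lam t := by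
  have hc : ∀ n : ℕ, ((α : ℂ) + 1) + (n : ℂ) ≠ 0 := by
    intro n
    have h1 : (α : ℂ) + 1 + (n : ℂ) = ((α + 1 + n : ℝ) : ℂ) := by push_cast; ring
    rw [h1, Complex.ofReal_ne_zero]
    intro h
    exact hα (n + 1) (by push_cast; linarith)
  have hjac : jacobiPhi α β lam = fun s : ℝ =>
      F0h ((((α : ℂ) + β + 1) - lam) / 2) ((((α : ℂ) + β + 1) + lam) / 2) ((α : ℂ) + 1)
        ((-(Real.sinh s ^ 2) : ℝ) : ℂ) := by
    funext s
    simp only [jacobiPhi, hyp2F1, F0h, hcoef, Complex.ofReal_neg]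
  set a : ℂ := (((α : ℂ) + β + 1) - lam) / 2 with hadef
  set b : ℂ := (((α : ℂ) + β + 1) + lam) / 2 with hbdef
  set c : ℂ := (α : ℂ) + 1 with hcdef
  have hu : ∀ s : ℝ, HasDerivAt (fun x : ℝ => -(Real.sinh x ^ 2))
      (-(2 * Real.sinh s * Real.cosh s)) s := by
    intro s
    have h := ((Real.hasDerivAt_sinh s).fun_pow 2).fun_neg
    simpa [pow_one, mul_assoc] using h
  set S : Set ℝ := {s : ℝ | Real.sinh s ^ 2 < 1} with hSdef
  have hSopen : IsOpen S := isOpen_lt (Real.continuous_sinh.pow 2) continuous_const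
  have htS : t ∈ S := ht1
  have hnorm : ∀ s ∈ S, ‖((-(Real.sinh s ^ 2) : ℝ) : ℂ)‖ < 1 := by
    intro s hs
    rw [Complex.norm_real, Real.norm_eq_abs, abs_neg, _root_.abs_of_nonneg (sq_nonneg _)]
    exact hs
  set V : ℝ → ℂ := fun s =>
    ((-(2 * Real.sinh s * Real.cosh s) : ℝ) : ℂ)
      * F1h a b c ((-(Real.sinh s ^ 2) : ℝ) : ℂ) with hV
  have hφ : ∀ s ∈ S, HasDerivAt (jacobiPhi α β lam) (V s) s := by
    intro s hs
    rw [hjac]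
    have h1 : HasDerivAt (fun x : ℝ => F0h a b c ((x : ℝ) : ℂ))
        (F1h a b c ((-(Real.sinh s ^ 2) : ℝ) : ℂ)) (-(Real.sinh s ^ 2)) :=
      (hasDerivAt_F0h a b hc (hnorm s hs)).comp_ofReal
    have h2 := HasDerivAt.scomp_of_eq (h := fun x : ℝ => -(Real.sinh x ^ 2)) (x := s) h1 (hu s) rfl
    have h3 : HasDerivAt (fun x : ℝ => F0h a b c ((-(Real.sinh x ^ 2) : ℝ) : ℂ))
        ((-(2 * Real.sinh s * Real.cosh s) : ℝ)
          • F1h a b c ((-(Real.sinh s ^ 2) : ℝ) : ℂ)) s := h2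
    rw [Complex.real_smul] at h3
    exact h3
  have c1 : HasDerivAt (fun s : ℝ => ((-(2 * Real.sinh s * Real.cosh s) : ℝ) : ℂ))
      ((-(2 * (Real.cosh t ^ 2 + Real.sinh t ^ 2)) : ℝ) : ℂ) t := by
    have hr : HasDerivAt (fun s : ℝ => -(2 * Real.sinh s * Real.cosh s))
        (-(2 * (Real.cosh t ^ 2 + Real.sinh t ^ 2))) t := by
      have h := (((Real.hasDerivAt_sinh t).const_mul 2).fun_mul (Real.hasDerivAt_cosh t)).fun_neg
      exact h.congr_deriv (by ring)
    exact hr.ofReal_comp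
  have c2 : HasDerivAt (fun s : ℝ => F1h a b c ((-(Real.sinh s ^ 2) : ℝ) : ℂ))
      (((-(2 * Real.sinh t * Real.cosh t) : ℝ) : ℂ)
        * F2h a b c ((-(Real.sinh t ^ 2) : ℝ) : ℂ)) t := by
    have h1 : HasDerivAt (fun x : ℝ => F1h a b c ((x : ℝ) : ℂ))
        (F2h a b c ((-(Real.sinh t ^ 2) : ℝ) : ℂ)) (-(Real.sinh t ^ 2)) :=
      (hasDerivAt_F1h a b hc (hnorm t htS)).comp_ofReal
    have h2 := HasDerivAt.scomp_of_eq (h := fun x : ℝ => -(Real.sinh x ^ 2)) (x := t) h1 (hu t) rfl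
    have h3 : HasDerivAt (fun x : ℝ => F1h a b c ((-(Real.sinh x ^ 2) : ℝ) : ℂ))
        ((-(2 * Real.sinh t * Real.cosh t) : ℝ)
          • F2h a b c ((-(Real.sinh t ^ 2) : ℝ) : ℂ)) t := h2
    rw [Complex.real_smul] at h3
    exact h3
  have hVd := c1.mul c2
  have hEv : deriv (jacobiPhi α β lam) =ᶠ[𝓝 t] V :=
    Filter.eventually_of_mem (hSopen.mem_nhds htS) (fun s hs => (hφ s hs).deriv)
  have hd2 : deriv (deriv (jacobiPhi α β lam)) t
      = ((-(2 * (Real.cosh t ^ 2 + Real.sinh t ^ 2)) : ℝ) : ℂ)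
          * F1h a b c ((-(Real.sinh t ^ 2) : ℝ) : ℂ)
        + ((-(2 * Real.sinh t * Real.cosh t) : ℝ) : ℂ)
          * (((-(2 * Real.sinh t * Real.cosh t) : ℝ) : ℂ)
            * F2h a b c ((-(Real.sinh t ^ 2) : ℝ) : ℂ)) := by
    rw [hEv.deriv_eq]
    exact hVd.deriv
  have hd1 : deriv (jacobiPhi α β lam) t = V t := (hφ t htS).deriv
  have hjt : jacobiPhi α β lam t = F0h a b c ((-(Real.sinh t ^ 2) : ℝ) : ℂ) := by
    rw [hjac]
  have ode := hyp_ode' a b hc (hnorm t htS)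
  rw [hd2, hd1, hjt, hV]
  have hsh0 : ((Real.sinh t : ℝ) : ℂ) ≠ 0 :=
    Complex.ofReal_ne_zero.2 (ne_of_gt (Real.sinh_pos_iff.2 ht))
  have hch0 : ((Real.cosh t : ℝ) : ℂ) ≠ 0 :=
    Complex.ofReal_ne_zero.2 (ne_of_gt (Real.cosh_pos t))
  have hch2 : ((Real.cosh t : ℝ) : ℂ) ^ 2 = ((Real.sinh t : ℝ) : ℂ) ^ 2 + 1 := by
    exact_mod_cast congrArg (fun x : ℝ => (x : ℂ)) (Real.cosh_sq t)
  have hKv : (((2*α+1) * (Real.cosh t / Real.sinh t) + (2*β+1) * Real.tanh t : ℝ) : ℂ)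
      * ((-(2 * Real.sinh t * Real.cosh t) : ℝ) : ℂ)
      = -(2*(2*(α:ℂ)+1)) * ((Real.cosh t : ℝ) : ℂ)^2
        - 2*(2*(β:ℂ)+1) * ((Real.sinh t : ℝ) : ℂ)^2 := by
    have hshr : Real.sinh t ≠ 0 := ne_of_gt (Real.sinh_pos_iff.2 ht)
    have hchr : Real.cosh t ≠ 0 := ne_of_gt (Real.cosh_pos t)
    have hKvR : ((2*α+1) * (Real.cosh t / Real.sinh t) + (2*β+1) * Real.tanh t)
        * (-(2 * Real.sinh t * Real.cosh t))
        = -(2*(2*α+1)) * Real.cosh t^2 - 2*(2*β+1) * Real.sinh t^2 := by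
      rw [Real.tanh_eq_sinh_div_cosh]
      field_simp
      ring
    exact_mod_cast congrArg (fun x : ℝ => (x : ℂ)) hKvR
  simp only [hadef, hbdef, hcdef] at ode
  simp only [Complex.ofReal_neg, Complex.ofReal_mul, Complex.ofReal_pow,
    Complex.ofReal_ofNat, Complex.ofReal_add, Complex.ofReal_one] at ode hKv ⊢
  linear_combination (-4 : ℂ) * ode
    + F1h a b c (-((Real.sinh t : ℂ) ^ 2)) * hKv
    + (4 * (Real.sinh t : ℂ) ^ 2 * F2h a b c (-((Real.sinh t : ℂ) ^ 2))
        - (4 * (α : ℂ) + 4) * F1h a b c (-((Real.sinh t : ℂ) ^ 2))) * hch2
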